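/- Let s ≥ 2 be an integer and let T = ℕ \ {r·s + t + 1 : r, t ≥ 0, r + t ≤ s - 2}. Then T equals {0} ∪ ⋃_{j=1}^{s-2} [j·s - (j-1), j·s] ∪ {n : n ≥ s² - 2s + 2}, and T is a numerical semigroup. -/
import Mathlib

def hermT (s : ℕ) : Set ℕ :=
  {x : ℕ | ¬ ∃ r t : ℕ, r + t ≤ s - 2 ∧ x = r * s + t + 1}

lemma hermT_rep (s x : ℕ) (hs : 2 ≤ s) (hx : 1 ≤ x) :
    (∃ r t : ℕ, r + t ≤ s - 2 ∧ x = r * s + t + 1) ↔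
      (x - 1) / s + (x - 1) % s ≤ s - 2 := by
  have hspos : 0 < s := by omega
  constructor
  · rintro ⟨r, t, hrt, rfl⟩
    have ht : t < s := by omega
    have h1 : r * s + t + 1 - 1 = t + r * s := by omega
    rw [h1, Nat.add_mul_div_right _ _ hspos, Nat.add_mul_mod_self_right,
      Nat.div_eq_of_lt ht, Nat.mod_eq_of_lt ht]
    omega
  · intro h
    refine ⟨(x - 1) / s, (x - 1) % s, h, ?_⟩
    have := Nat.mod_add_div' (x - 1) s
    omega

lemma hermT_elem (s a : ℕ) (hs : 2 ≤ s) (ha1 : 1 ≤ a) (haT : a ∈ hermT s) :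
    ∃ q t : ℕ, t < s ∧ s - 1 ≤ q + t ∧ a = q * s + t + 1 := by
  refine ⟨(a - 1) / s, (a - 1) % s, Nat.mod_lt _ (by omega), ?_, ?_⟩
  · by_contra h
    push_neg at h
    exact haT ((hermT_rep s a hs ha1).mpr (by omega))
  · have := Nat.mod_add_div' (a - 1) s
    omega

theorem stmt12 (s : ℕ) (hs : 2 ≤ s) :
    (hermT s = {0} ∪ (⋃ j ∈ Finset.Icc 1 (s - 2), Set.Icc (j * s - (j - 1)) (j * s))
        ∪ {n : ℕ | s ^ 2 - 2 * s + 2 ≤ n}) ∧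
    0 ∈ hermT s ∧
    (∀ a b : ℕ, a ∈ hermT s → b ∈ hermT s → a + b ∈ hermT s) ∧
    (hermT s)ᶜ.Finite := by
  have h0 : 0 ∈ hermT s := by
    rintro ⟨r, t, hrt, h⟩
    omega
  refine ⟨?_, h0, ?_, ?_⟩
  · -- set equality
    ext x
    simp only [hermT, Set.mem_setOf_eq, Set.mem_union, Set.mem_singleton_iff,
      Set.mem_iUnion, Finset.mem_Icc, Set.mem_Icc]
    constructor
    · intro hxT
      by_cases hx0 : x = 0
      · exact Or.inl (Or.inl hx0)
      obtain ⟨q, t, ht, hqt, hx⟩ := hermT_elem s x hs (by omega) hxT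
      by_cases hq : s ≤ q + 2
      · -- x ≥ s^2 - 2s + 2
        right
        have hsq : s ^ 2 = s * s := sq s
        rcases le_or_gt s (q + 1) with hq1 | hq1
        · have hm : (s - 1) * s ≤ q * s := Nat.mul_le_mul_right s (by omega)
          have he : (s - 1) * s = s * s - s := by
            rw [Nat.sub_mul, one_mul]
          have h2s : 2 * s ≤ s * s := Nat.mul_le_mul_right s hs
          omega
        · have hq2 : q = s - 2 := by omega
          have he : q * s = s * s - 2 * s := by
            rw [hq2, Nat.sub_mul]
          have h2s : 2 * s ≤ s * s := Nat.mul_le_mul_right s hs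
          omega
      · -- x in the Icc for j = q + 1
        left; right
        refine ⟨q + 1, ⟨by omega, by omega⟩, ?_, ?_⟩
        · have he : (q + 1) * s = q * s + s := by ring
          omega
        · have he : (q + 1) * s = q * s + s := by ring
          omega
    · rintro (h | h) hrep
      · obtain ⟨r, t, hrt, hx⟩ := hrep
        rcases h with h | ⟨j, ⟨hj1, hj2⟩, hlow, hup⟩
        · omega
        · subst hx
          have h1 : r < j := lt_of_mul_lt_mul_right (show r * s < j * s by omega)
            (Nat.zero_le s)
          have hm1 : (r + 1) * s ≤ j * s := Nat.mul_le_mul_right s h1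
          have he1 : (r + 1) * s = r * s + s := by ring
          have h2 : r + 2 ≤ j := by omega
          have hm2 : (r + 2) * s ≤ j * s := Nat.mul_le_mul_right s h2
          have he2 : (r + 2) * s = r * s + 2 * s := by ring
          omega
      · obtain ⟨r, t, hrt, hx⟩ := hrep
        have hsq : s ^ 2 = s * s := sq s
        have h1 : r ≤ s - 2 := by omega
        have hm : r * s ≤ (s - 2) * s := Nat.mul_le_mul_right s h1
        have he : (s - 2) * s = s * s - 2 * s := Nat.sub_mul s 2 s
        have h2s : 2 * s ≤ s * s := Nat.mul_le_mul_right s hs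
        -- sharper: use r + t ≤ s - 2 jointly
        have h3 : r * (s - 1) ≤ (s - 2) * (s - 1) := Nat.mul_le_mul_right (s - 1) h1
        have he3 : r * (s - 1) + r = r * s := by
          obtain ⟨u, rfl⟩ : ∃ u, s = u + 1 := ⟨s - 1, by omega⟩
          rw [Nat.add_sub_cancel]
          ring
        have he4 : (s - 2) * (s - 1) + (3 * s) = s * s + 2 := by
          obtain ⟨u, rfl⟩ : ∃ u, s = u + 2 := ⟨s - 2, by omega⟩
          rw [Nat.add_sub_cancel, show u + 2 - 1 = u + 1 from by omega]
          ring
        omega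
  · -- closed under addition
    intro a b ha hb
    by_cases ha0 : a = 0
    · simpa [ha0] using hb
    by_cases hb0 : b = 0
    · simpa [hb0] using ha
    obtain ⟨qa, ta, hta, hqta, hae⟩ := hermT_elem s a hs (by omega) ha
    obtain ⟨qb, tb, htb, hqtb, hbe⟩ := hermT_elem s b hs (by omega) hb
    rintro ⟨r, t, hrt, hab⟩
    rw [hae, hbe] at hab
    by_cases hr1 : r < qa + qb
    · have hm := Nat.mul_le_mul_right s (show r + 1 ≤ qa + qb by omega)
      have he1 : (r + 1) * s = r * s + s := by ring
      have he2 : (qa + qb) * s = qa * s + qb * s := by ring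
      omega
    by_cases hr2 : qa + qb + 1 < r
    · have hm := Nat.mul_le_mul_right s (show qa + qb + 2 ≤ r by omega)
      have he1 : (qa + qb + 2) * s = qa * s + qb * s + 2 * s := by ring
      omega
    have : r = qa + qb ∨ r = qa + qb + 1 := by omega
    rcases this with h | h <;> subst h
    · have he : (qa + qb) * s = qa * s + qb * s := by ring
      omega
    · have he : (qa + qb + 1) * s = qa * s + qb * s + s := by ring
      omega
  · -- cofinite
    apply Set.Finite.subset (Set.finite_Iio (s * s))
    intro x hx
    simp only [hermT, Set.mem_compl_iff, Set.mem_setOf_eq, not_not] at hx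
    obtain ⟨r, t, hrt, rfl⟩ := hx
    have h1 : r ≤ s - 2 := by omega
    have hm : r * s ≤ (s - 2) * s := Nat.mul_le_mul_right s h1
    have he : (s - 2) * s = s * s - 2 * s := Nat.sub_mul s 2 s
    have h2s : 2 * s ≤ s * s := Nat.mul_le_mul_right s hs
    simp only [Set.mem_Iio]
    omega
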